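/- Let V be a finite-dimensional real inner product space with three linear isometries I, J, K : V → V satisfying I² = J² = K² = -id and I∘J = K. Let G ⊆ T be subspaces of V such that A(G) ⊆ T^⊥ for each A ∈ {I, J, K}, where T^⊥ is the orthogonal complement of T. Then I(G) ∩ J(G) = {0}, and likewise J(G) ∩ K(G) = {0} and I(G) ∩ K(G) = {0}. -/
import Mathlib


open Submodule

/-- In the setting of a tri-hamiltonian action at a point of `μ⁻¹(0)`: if `G ≤ T` and
`A(G) ⊆ Tᗮ` for `A ∈ {I, J, K}`, then `I(G), J(G), K(G)` intersect pairwise trivially. -/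
theorem IG_JG_KG_trivial_intersections
    (V : Type*) [NormedAddCommGroup V] [InnerProductSpace ℝ V] [FiniteDimensional ℝ V]
    (I J K : V →ₗᵢ[ℝ] V)
    (hI : ∀ v : V, I (I v) = -v) (hJ : ∀ v : V, J (J v) = -v)
    (hK : ∀ v : V, K (K v) = -v) (hIJ : ∀ v : V, I (J v) = K v)
    (G T : Submodule ℝ V) (hGT : G ≤ T)
    (hIG : ∀ g ∈ G, I g ∈ Tᗮ) (hJG : ∀ g ∈ G, J g ∈ Tᗮ) (hKG : ∀ g ∈ G, K g ∈ Tᗮ) :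
    G.map I.toLinearMap ⊓ G.map J.toLinearMap = ⊥ ∧
    G.map J.toLinearMap ⊓ G.map K.toLinearMap = ⊥ ∧
    G.map I.toLinearMap ⊓ G.map K.toLinearMap = ⊥ := by
  -- an element of both T and Tᗮ is zero
  have haux : ∀ g : V, g ∈ T → g ∈ Tᗮ → g = 0 := fun g hg hg' =>
    (Submodule.disjoint_def.mp T.orthogonal_disjoint) g hg hg'
  -- derived relation: J ∘ K = I
  have hJK : ∀ v : V, J (K v) = I v := by
    intro v
    have h1 : I (J (K v)) = -v := by rw [hIJ (K v), hK v]
    have h2 : I (I (J (K v))) = I (-v) := by rw [h1]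
    rw [hI (J (K v)), map_neg] at h2
    exact neg_injective h2
  refine ⟨?_, ?_, ?_⟩
  · rw [eq_bot_iff]
    rintro x ⟨⟨g₁, hg₁, rfl⟩, ⟨g₂, hg₂, he⟩⟩
    simp only [LinearIsometry.coe_toLinearMap] at he ⊢
    -- I g₁ = J g₂ ; apply I : -g₁ = K g₂
    have h1 : -g₁ = K g₂ := by rw [← hI g₁, ← he, hIJ]
    have hg₁0 : g₁ = 0 := haux g₁ (hGT hg₁) (by
      have : g₁ = -(K g₂) := by rw [← h1, neg_neg]
      rw [this]; exact neg_mem (hKG g₂ hg₂))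
    simp [hg₁0]
  · rw [eq_bot_iff]
    rintro x ⟨⟨g₁, hg₁, rfl⟩, ⟨g₂, hg₂, he⟩⟩
    simp only [LinearIsometry.coe_toLinearMap] at he ⊢
    -- J g₁ = K g₂ ; apply J : -g₁ = I g₂
    have h1 : -g₁ = I g₂ := by rw [← hJ g₁, ← he, hJK]
    have hg₁0 : g₁ = 0 := haux g₁ (hGT hg₁) (by
      have : g₁ = -(I g₂) := by rw [← h1, neg_neg]
      rw [this]; exact neg_mem (hIG g₂ hg₂))
    simp [hg₁0]
  · rw [eq_bot_iff]
    rintro x ⟨⟨g₁, hg₁, rfl⟩, ⟨g₂, hg₂, he⟩⟩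
    simp only [LinearIsometry.coe_toLinearMap] at he ⊢
    -- I g₁ = K g₂ = I (J g₂), so g₁ = J g₂
    have h1 : g₁ = J g₂ := I.injective (by rw [← he, hIJ])
    have hg₁0 : g₁ = 0 := haux g₁ (hGT hg₁) (h1 ▸ hJG g₂ hg₂)
    simp [hg₁0]
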